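/- arXiv:1607.06553 — 2 statements merged into one kernel-verified Lean document; each statement's English description precedes it below -/
import Mathlib

section
/- For g ≥ 1, the group S_g of matrices [[I_g,B],[0,I_g]] with B symmetric is normally generated in urSp(2g) by Y_{1,1} = [[I_g, S_{1,1}],[0,I_g]], where S_{1,1} is the matrix with (1,1)-entry 1 and all other entries 0. That is, S_g is the smallest normal subgroup of urSp(2g) containing Y_{1,1}. -/
open Matrix

/-- The standard symplectic form matrix `J = [[0, I],[-I, 0]]`. -/
def Jmat (g : ℕ) : Matrix (Fin g ⊕ Fin g) (Fin g ⊕ Fin g) ℤ := fromBlocks 0 1 (-1) 0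

/-- `Sp(2g, ℤ)` as a set of integer matrices. -/
def SpSet (g : ℕ) : Set (Matrix (Fin g ⊕ Fin g) (Fin g ⊕ Fin g) ℤ) :=
  {X | IsUnit X.det ∧ Xᵀ * Jmat g * X = Jmat g}

/-- `urSp(2g)`: symplectic matrices with vanishing lower-left `g × g` block. -/
def urSpSet (g : ℕ) : Set (Matrix (Fin g ⊕ Fin g) (Fin g ⊕ Fin g) ℤ) :=
  {X | X ∈ SpSet g ∧ X.toBlocks₂₁ = 0}

/-- The explicit description: matrices `[[A, B],[0, ᵗA⁻¹]]` with `A` unimodular and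
`A⁻¹ * B` symmetric. -/
def urSpSet' (g : ℕ) : Set (Matrix (Fin g ⊕ Fin g) (Fin g ⊕ Fin g) ℤ) :=
  {X | ∃ A B : Matrix (Fin g) (Fin g) ℤ, IsUnit A.det ∧ (A⁻¹ * B).IsSymm ∧
    X = fromBlocks A B 0 (A⁻¹)ᵀ}

/-- `S_{i,j}`: the symmetric matrix with `1` at `(i,j)` and `(j,i)` and `0` elsewhere
(just a `1` at `(i,i)` when `i = j`). -/
def Smat (g : ℕ) (i j : Fin g) : Matrix (Fin g) (Fin g) ℤ :=
  Matrix.of fun k l => if (k = i ∧ l = j) ∨ (k = j ∧ l = i) then 1 else 0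

/-- The elementary matrix `E_{i,j} = I + ℰ_{i,j}`. -/
def Emat (g : ℕ) (i j : Fin g) : Matrix (Fin g) (Fin g) ℤ := 1 + Matrix.single i j 1

/-- `F_i = I - 2 S_{i,i}`. -/
def Fmat (g : ℕ) (i : Fin g) : Matrix (Fin g) (Fin g) ℤ := 1 - 2 • Matrix.single i i 1

/-- `A_{i,j} = I + S_{i,j} - S_{i,i} - S_{j,j}`, the transposition permutation matrix. -/
def Amat (g : ℕ) (i j : Fin g) : Matrix (Fin g) (Fin g) ℤ :=
  1 + Smat g i j - Smat g i i - Smat g j j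

/-- `Y_{i,j} = [[I, S_{i,j}],[0, I]]`. -/
def Ymat (g : ℕ) (i j : Fin g) : Matrix (Fin g ⊕ Fin g) (Fin g ⊕ Fin g) ℤ :=
  fromBlocks 1 (Smat g i j) 0 1

/-- `X_{i,j} = [[E_{i,j}, 0],[0, ᵗE_{i,j}⁻¹]]` (the paper's `-E_{j,i}` denotes `ᵗE_{i,j}⁻¹`). -/
noncomputable def Xmat (g : ℕ) (i j : Fin g) : Matrix (Fin g ⊕ Fin g) (Fin g ⊕ Fin g) ℤ :=
  fromBlocks (Emat g i j) 0 0 ((Emat g i j)⁻¹)ᵀ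

/-- `Z_i = [[F_i, 0],[0, F_i]]`. -/
def Zmat (g : ℕ) (i : Fin g) : Matrix (Fin g ⊕ Fin g) (Fin g ⊕ Fin g) ℤ :=
  fromBlocks (Fmat g i) 0 0 (Fmat g i)

/-- `S_g = {[[I, B],[0, I]] : B symmetric}`. -/
def SgSet (g : ℕ) : Set (Matrix (Fin g ⊕ Fin g) (Fin g ⊕ Fin g) ℤ) :=
  {X | ∃ B : Matrix (Fin g) (Fin g) ℤ, B.IsSymm ∧ X = fromBlocks 1 B 0 1}

/-- `GL(g, ℤ)` as the set of integer matrices with unit determinant. -/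
def GLSet (g : ℕ) : Set (Matrix (Fin g) (Fin g) ℤ) := {X | IsUnit X.det}

/-- The level-`d` principal congruence subgroup `Γ_d(g)` of `GL(g, ℤ)`. -/
def GammaSet (d g : ℕ) : Set (Matrix (Fin g) (Fin g) ℤ) :=
  {X | IsUnit X.det ∧ X.map (fun a : ℤ => (a : ZMod d)) = 1}

/-- The normal closure of `S` in the group `U` (a subset of invertible matrices),
described as the set of products of `U`-conjugates of elements of `S` and their inverses. -/
def ncl {n : Type*} [Fintype n] [DecidableEq n]
    (U S : Set (Matrix n n ℤ)) : Set (Matrix n n ℤ) :=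
  ↑(Submonoid.closure {m | ∃ u ∈ U, ∃ y ∈ S, m = u * y * u⁻¹ ∨ m = u * y⁻¹ * u⁻¹})


open Matrix



section Aux

variable {g : ℕ}

abbrev Mg (g : ℕ) := Matrix (Fin g) (Fin g) ℤ

lemma mulY (B C : Mg g) :
    fromBlocks (1 : Mg g) B 0 (1 : Mg g) * fromBlocks 1 C 0 1 = fromBlocks 1 (B + C) 0 1 := by
  simp [fromBlocks_multiply, add_comm]

lemma Yinv (B : Mg g) :
    (fromBlocks (1 : Mg g) B 0 (1 : Mg g))⁻¹ = fromBlocks 1 (-B) 0 1 := by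
  apply Matrix.inv_eq_right_inv
  simp [fromBlocks_multiply, fromBlocks_one]

lemma conj_eq {A B D : Mg g} (h1 : A * Dᵀ = 1) (h2 : Dᵀ * A = 1) (S : Mg g) :
    (fromBlocks A B 0 D) * fromBlocks 1 S 0 1 * (fromBlocks A B 0 D)⁻¹
      = fromBlocks 1 (A * S * Aᵀ) 0 1 := by
  have hAD : Aᵀ * D = 1 := by
    have := congrArg Matrix.transpose h2
    simpa using this
  have hDA : D * Aᵀ = 1 := mul_eq_one_comm.mp hAD
  have hABA : A * (Dᵀ * B * Aᵀ) = B * Aᵀ := by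
    rw [← Matrix.mul_assoc, ← Matrix.mul_assoc, h1, Matrix.one_mul]
  have hinv : (fromBlocks A B 0 D)⁻¹ = fromBlocks Dᵀ (-(Dᵀ * B * Aᵀ)) 0 Aᵀ := by
    apply Matrix.inv_eq_right_inv
    rw [fromBlocks_multiply]
    rw [← fromBlocks_one (l := Fin g) (m := Fin g) (α := ℤ)]
    congr 1 <;> simp [h1, hDA, Matrix.mul_neg, hABA]
  rw [hinv, fromBlocks_multiply, fromBlocks_multiply]
  congr 1 <;> simp [h1, hDA, Matrix.mul_neg, hABA]
  rw [Matrix.add_mul]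
  abel

end Aux

section More
variable {g : ℕ}

lemma outer_eq (A : Mg g) (z : Fin g) :
    A * Smat g z z * Aᵀ = Matrix.of fun k l => A k z * A l z := by
  ext k l
  simp [Matrix.mul_apply, Smat, Matrix.transpose_apply, ite_and, Finset.sum_mul, mul_comm]

end More

section More2
variable {g : ℕ}

lemma perm_col (z i k : Fin g) :
    (Equiv.Perm.permMatrix ℤ (Equiv.swap z i)) k z = if k = i then 1 else 0 := by
  simp only [Equiv.Perm.permMatrix, PEquiv.toMatrix_apply, Equiv.toPEquiv_apply, Option.mem_def,
    Option.some.injEq]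
  congr 1
  simp only [eq_iff_iff]
  constructor
  · intro h
    have h2 : k = i := by
      have := congrArg (Equiv.swap z i) h
      simpa using this
    exact h2
  · rintro rfl
    simp

lemma perm_isUnit (σ : Equiv.Perm (Fin g)) : IsUnit (σ.permMatrix ℤ).det := by
  rw [Matrix.det_permutation]
  exact (Equiv.Perm.sign σ).isUnit

lemma outer_perm (z i : Fin g) :
    (Equiv.Perm.permMatrix ℤ (Equiv.swap z i)) * Smat g z z *
      (Equiv.Perm.permMatrix ℤ (Equiv.swap z i))ᵀ = Smat g i i := by
  rw [outer_eq]
  ext k l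
  rw [Matrix.of_apply, perm_col, perm_col]
  rcases eq_or_ne k i with hk | hk <;> rcases eq_or_ne l i with hl | hl <;>
    simp_all [Smat]

lemma emat_col (z i j k : Fin g) (hij : i ≠ j) :
    ((1 + Matrix.single j i (1:ℤ)) * Equiv.Perm.permMatrix ℤ (Equiv.swap z i)) k z
      = (if k = i then 1 else 0) + (if k = j then 1 else 0) := by
  rw [Matrix.mul_apply]
  simp only [perm_col, mul_ite, mul_one, mul_zero]
  rw [Finset.sum_ite_eq' Finset.univ i]
  simp only [Finset.mem_univ, if_true, Matrix.add_apply, Matrix.one_apply, Matrix.single,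
    Matrix.of_apply]
  rcases eq_or_ne k i with hk | hk <;> rcases eq_or_ne k j with hk2 | hk2 <;> simp_all
  · exact fun h => absurd h.symm hij
  · intro h; exact absurd h.symm hk2

lemma outer_em (z i j : Fin g) (hij : i ≠ j) :
    ((1 + Matrix.single j i (1:ℤ)) * Equiv.Perm.permMatrix ℤ (Equiv.swap z i)) * Smat g z z *
      ((1 + Matrix.single j i (1:ℤ)) * Equiv.Perm.permMatrix ℤ (Equiv.swap z i))ᵀ
      = Smat g i i + Smat g j j + Smat g i j := by
  rw [outer_eq]
  ext k l
  rw [Matrix.of_apply, emat_col z i j k hij, emat_col z i j l hij]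
  rcases eq_or_ne k i with hk | hk <;> rcases eq_or_ne l i with hl | hl <;>
    rcases eq_or_ne k j with hk2 | hk2 <;> rcases eq_or_ne l j with hl2 | hl2 <;>
    simp_all [Smat]

lemma em_isUnit (z i j : Fin g) (hij : i ≠ j) :
    IsUnit ((1 + Matrix.single j i (1:ℤ)) * Equiv.Perm.permMatrix ℤ (Equiv.swap z i)).det := by
  rw [Matrix.det_mul]
  apply IsUnit.mul
  · have h : (1 + Matrix.single j i (1:ℤ)) = Matrix.transvection j i 1 := by
      simp [Matrix.transvection]
    rw [h, Matrix.det_transvection_of_ne _ _ hij.symm]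
    exact isUnit_one
  · exact perm_isUnit _

end More2

section More3
variable {g : ℕ}

lemma symm_decomp (B : Mg g) (hB : B.IsSymm) :
    B = ∑ p ∈ Finset.univ.filter (fun p : Fin g × Fin g => p.1 ≤ p.2),
      B p.1 p.2 • Smat g p.1 p.2 := by
  ext k l
  rw [Matrix.sum_apply]
  have hterm : ∀ p : Fin g × Fin g,
      (B p.1 p.2 • Smat g p.1 p.2) k l
        = if (k = p.1 ∧ l = p.2) ∨ (k = p.2 ∧ l = p.1) then B p.1 p.2 else 0 := by
    intro p
    simp only [Matrix.smul_apply, Smat, Matrix.of_apply, smul_eq_mul, mul_ite, mul_one, mul_zero]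
  rcases le_or_gt k l with h | h
  · rw [Finset.sum_eq_single_of_mem (k, l) (by simp [h])]
    · rw [hterm]
      simp
    · intro q hq hne
      rw [hterm]
      rw [Finset.mem_filter] at hq
      apply if_neg
      rintro (⟨rfl, rfl⟩ | ⟨rfl, rfl⟩)
      · exact hne rfl
      · exact hne (by
          have : q.1 = q.2 := le_antisymm hq.2 h
          cases q
          simp_all)
  · rw [Finset.sum_eq_single_of_mem (l, k) (by simp [le_of_lt h])]
    · rw [hterm]
      have : B l k = B k l := by
        conv_lhs => rw [← hB]
        rfl
      simp [this]
    · intro q hq hne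
      rw [hterm]
      rw [Finset.mem_filter] at hq
      apply if_neg
      rintro (⟨rfl, rfl⟩ | ⟨rfl, rfl⟩)
      · exact absurd hq.2 (not_le_of_gt h)
      · exact hne rfl

lemma urSp_struct' (u : Matrix (Fin g ⊕ Fin g) (Fin g ⊕ Fin g) ℤ)
    (hdet : uᵀ * Jmat g * u = Jmat g) (hc : u.toBlocks₂₁ = 0) :
    ∃ A B D : Mg g, u = fromBlocks A B 0 D ∧ A * Dᵀ = 1 ∧ Dᵀ * A = 1 := by
  refine ⟨u.toBlocks₁₁, u.toBlocks₁₂, u.toBlocks₂₂, ?_, ?_, ?_⟩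
  · rw [← hc, fromBlocks_toBlocks]
  all_goals {
    rw [← fromBlocks_toBlocks u, hc] at hdet
    set A := u.toBlocks₁₁
    set B := u.toBlocks₁₂
    set D := u.toBlocks₂₂
    rw [Jmat, fromBlocks_transpose, fromBlocks_multiply, fromBlocks_multiply] at hdet
    simp only [Matrix.mul_zero, Matrix.zero_mul, Matrix.mul_one, Matrix.one_mul,
      Matrix.mul_neg, Matrix.neg_mul, add_zero, zero_add, transpose_zero] at hdet
    have h12 := congrArg Matrix.toBlocks₁₂ hdet
    have h21 := congrArg Matrix.toBlocks₂₁ hdet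
    simp only [toBlocks_fromBlocks₁₂, toBlocks_fromBlocks₂₁] at h12 h21
    have hDA : Dᵀ * A = 1 := by
      have := congrArg Neg.neg h21
      simpa using this
    first
      | exact mul_eq_one_comm.mp hDA
      | exact hDA
  }
end More3

section Main
variable {g : ℕ}











lemma smat_isSymm (i j : Fin g) : (Smat g i j).IsSymm := by
  unfold Matrix.IsSymm
  ext k l
  simp only [Matrix.transpose_apply, Smat, Matrix.of_apply]
  congr 1
  simp only [eq_iff_iff]
  tauto

lemma conj_isSymm {A S : Mg g} (hS : S.IsSymm) : (A * S * Aᵀ).IsSymm := by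
  have h : (A * S * Aᵀ)ᵀ = A * Sᵀ * Aᵀ := by
    rw [Matrix.transpose_mul, Matrix.transpose_mul, Matrix.transpose_transpose,
      Matrix.mul_assoc]
  rw [Matrix.IsSymm, h, hS]

lemma diag_mem_urSp (A : Mg g) (hA : IsUnit A.det) :
    fromBlocks A 0 0 (A⁻¹)ᵀ ∈ urSpSet g := by
  have hAi : A * A⁻¹ = 1 := Matrix.mul_nonsing_inv A hA
  have hiA : A⁻¹ * A = 1 := Matrix.nonsing_inv_mul A hA
  have h3 : Aᵀ * (A⁻¹)ᵀ = 1 := by rw [← Matrix.transpose_mul, hiA, Matrix.transpose_one]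
  have h4 : (A⁻¹)ᵀ * Aᵀ = 1 := by rw [← Matrix.transpose_mul, hAi, Matrix.transpose_one]
  refine ⟨⟨?_, ?_⟩, ?_⟩
  · apply Matrix.isUnit_det_of_right_inverse (B := fromBlocks A⁻¹ 0 0 Aᵀ)
    rw [fromBlocks_multiply]
    rw [← fromBlocks_one (l := Fin g) (m := Fin g) (α := ℤ)]
    congr 1 <;> simp [hAi, h4]
  · rw [Jmat, fromBlocks_transpose, fromBlocks_multiply, fromBlocks_multiply]
    congr 1 <;> simp [hiA, h3, Matrix.transpose_transpose]
  · exact toBlocks_fromBlocks₂₁ _ _ _ _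

lemma sg_eq_ncl (g : ℕ) (z : Fin g) :
    SgSet g = ncl (urSpSet g) {Ymat g z z} := by
  unfold ncl
  set gen := {m | ∃ u ∈ urSpSet g, ∃ y ∈ ({Ymat g z z} : Set (Matrix (Fin g ⊕ Fin g) (Fin g ⊕ Fin g) ℤ)),
    m = u * y * u⁻¹ ∨ m = u * y⁻¹ * u⁻¹} with hgen
  apply subset_antisymm
  · -- SgSet ⊆ ncl
    rintro x ⟨B, hB, rfl⟩
    rw [SetLike.mem_coe]
    -- the predicate T
    set T : Mg g → Prop := fun C => fromBlocks (1 : Mg g) C 0 (1 : Mg g) ∈ Submonoid.closure gen ∧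
      fromBlocks (1 : Mg g) (-C) 0 (1 : Mg g) ∈ Submonoid.closure gen with hT
    have hT0 : T 0 := by
      constructor
      · rw [fromBlocks_one]; exact one_mem _
      · rw [neg_zero, fromBlocks_one]; exact one_mem _
    have hTadd : ∀ B C : Mg g, T B → T C → T (B + C) := by
      intro B C h1 h2
      constructor
      · rw [← mulY]; exact mul_mem h1.1 h2.1
      · rw [neg_add, ← mulY]; exact mul_mem h1.2 h2.2
    have hTneg : ∀ B : Mg g, T B → T (-B) := by
      intro B h
      exact ⟨h.2, by rw [neg_neg]; exact h.1⟩
    have hTsmul : ∀ B : Mg g, T B → ∀ n : ℤ, T (n • B) := by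
      intro B h n
      induction n using Int.induction_on with
      | zero => simpa using hT0
      | succ n ih =>
        have e : ((n : ℤ) + 1) • B = (n : ℤ) • B + B := by rw [add_smul, one_smul]
        rw [e]; exact hTadd _ _ ih h
      | pred n ih =>
        have e : (-(n : ℤ) - 1) • B = (-(n : ℤ)) • B + -B := by
          rw [sub_smul, one_smul, sub_eq_add_neg]
        rw [e]; exact hTadd _ _ ih (hTneg _ h)
    have hgenT : ∀ A : Mg g, IsUnit A.det → T (A * Smat g z z * Aᵀ) := by
      intro A hA
      set u := fromBlocks A 0 0 (A⁻¹)ᵀ with hu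
      have h1 : A * ((A⁻¹)ᵀ)ᵀ = 1 := by
        rw [Matrix.transpose_transpose]; exact Matrix.mul_nonsing_inv A hA
      have h2 : ((A⁻¹)ᵀ)ᵀ * A = 1 := by
        rw [Matrix.transpose_transpose]; exact Matrix.nonsing_inv_mul A hA
      have humem : u ∈ urSpSet g := diag_mem_urSp A hA
      have hY : Ymat g z z = fromBlocks 1 (Smat g z z) 0 1 := rfl
      constructor
      · have hc : u * Ymat g z z * u⁻¹ ∈ gen := ⟨u, humem, Ymat g z z, rfl, Or.inl rfl⟩
        have := Submonoid.subset_closure hc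
        rwa [hY, conj_eq h1 h2] at this
      · have hc : u * (Ymat g z z)⁻¹ * u⁻¹ ∈ gen := ⟨u, humem, Ymat g z z, rfl, Or.inr rfl⟩
        have hmem := Submonoid.subset_closure hc
        rw [hY, Yinv, conj_eq h1 h2] at hmem
        have e : A * (-(Smat g z z)) * Aᵀ = -(A * Smat g z z * Aᵀ) := by
          rw [Matrix.mul_neg, Matrix.neg_mul]
        rwa [e] at hmem
    have hTii : ∀ i : Fin g, T (Smat g i i) := by
      intro i
      have := hgenT (Equiv.Perm.permMatrix ℤ (Equiv.swap z i)) (perm_isUnit _)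
      rwa [outer_perm] at this
    have hTij : ∀ i j : Fin g, i ≠ j → T (Smat g i j) := by
      intro i j hij
      have h := hgenT _ (em_isUnit z i j hij)
      rw [outer_em z i j hij] at h
      have heq : Smat g i j =
          (Smat g i i + Smat g j j + Smat g i j) + -(Smat g i i) + -(Smat g j j) := by abel
      rw [heq]
      exact hTadd _ _ (hTadd _ _ h (hTneg _ (hTii i))) (hTneg _ (hTii j))
    have hTB : T B := by
      rw [symm_decomp B hB]
      apply Finset.sum_induction _ T hTadd hT0
      intro p hp
      apply hTsmul
      rcases eq_or_ne p.1 p.2 with h | h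
      · rw [h]; exact hTii p.2
      · exact hTij p.1 p.2 h
    exact hTB.1
  · -- ncl ⊆ SgSet
    intro x hx
    rw [SetLike.mem_coe] at hx
    induction hx using Submonoid.closure_induction with
    | one => exact ⟨0, by simp [Matrix.IsSymm], by rw [fromBlocks_one]⟩
    | mul a b ha hb iha ihb =>
      obtain ⟨B, hB, rfl⟩ := iha
      obtain ⟨C, hC, rfl⟩ := ihb
      exact ⟨B + C, hB.add hC, by rw [mulY]⟩
    | mem m hm =>
      obtain ⟨u, hu, y, hy, hor⟩ := hm
      rw [Set.mem_singleton_iff] at hy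
      subst hy
      obtain ⟨A, B, D, rfl, h1, h2⟩ := urSp_struct' u hu.1.2 hu.2
      have hS : (Smat g z z).IsSymm := smat_isSymm z z
      rcases hor with rfl | rfl
      · rw [show Ymat g z z = fromBlocks 1 (Smat g z z) 0 1 from rfl, conj_eq h1 h2]
        exact ⟨A * Smat g z z * Aᵀ, conj_isSymm hS, rfl⟩
      · rw [show Ymat g z z = fromBlocks 1 (Smat g z z) 0 1 from rfl, Yinv, conj_eq h1 h2]
        exact ⟨A * (-(Smat g z z)) * Aᵀ, conj_isSymm (by rw [Matrix.IsSymm, Matrix.transpose_neg, hS]), rfl⟩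



/-- For `g ≥ 1`, `S_g` is the normal closure of `Y_{1,1}` in `urSp(2g)`. -/
theorem stmt4 (g : ℕ) (hg : 1 ≤ g) :
    SgSet g = ncl (urSpSet g) {Ymat g ⟨0, by omega⟩ ⟨0, by omega⟩} :=
  sg_eq_ncl g ⟨0, by omega⟩

end Main
end

section
/- For g ≥ 1 and d ≥ 2, S_g[d] is contained in the normal closure of Y_{1,1}^d in urSp(2g). -/
open Matrix

/-! ### Auxiliary material -/


namespace Stmt13Aux

variable {g : ℕ}

/-- Abbreviation for upper unitriangular block matrices. -/
def up (B : Matrix (Fin g) (Fin g) ℤ) : Matrix (Fin g ⊕ Fin g) (Fin g ⊕ Fin g) ℤ :=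
  fromBlocks 1 B 0 1

lemma upper_mul (B C : Matrix (Fin g) (Fin g) ℤ) : up B * up C = up (B + C) := by
  rw [up, up, up, fromBlocks_multiply]; simp [add_comm]

lemma up_zero : (up 0 : Matrix (Fin g ⊕ Fin g) (Fin g ⊕ Fin g) ℤ) = 1 := by
  rw [up, ← fromBlocks_one]

lemma upper_pow (B : Matrix (Fin g) (Fin g) ℤ) (d : ℕ) :
    up B ^ d = up ((d : ℤ) • B) := by
  induction d with
  | zero => simp [up_zero]
  | succ n ih =>
      rw [pow_succ, ih, upper_mul]
      congr 1
      push_cast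
      rw [add_smul, one_smul]

lemma u_inv (A : Matrix (Fin g) (Fin g) ℤ) (hA : IsUnit A.det) :
    (fromBlocks A 0 0 (A⁻¹)ᵀ)⁻¹ = fromBlocks A⁻¹ 0 0 Aᵀ := by
  apply inv_eq_right_inv
  rw [fromBlocks_multiply]
  simp [Matrix.mul_nonsing_inv A hA, ← transpose_mul, Matrix.nonsing_inv_mul A hA, fromBlocks_one]

lemma upper_inv (B : Matrix (Fin g) (Fin g) ℤ) : (up B)⁻¹ = up (-B) := by
  apply inv_eq_right_inv
  rw [upper_mul]; simp [up_zero]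

lemma conj_eq (A B : Matrix (Fin g) (Fin g) ℤ) (hA : IsUnit A.det) :
    fromBlocks A 0 0 (A⁻¹)ᵀ * up B * (fromBlocks A 0 0 (A⁻¹)ᵀ)⁻¹
      = up (A * B * Aᵀ) := by
  rw [u_inv A hA, up, up, fromBlocks_multiply, fromBlocks_multiply]
  simp [Matrix.mul_nonsing_inv A hA, ← transpose_mul, Matrix.nonsing_inv_mul A hA,
    Matrix.mul_assoc]

lemma u_mem (A : Matrix (Fin g) (Fin g) ℤ) (hA : IsUnit A.det) :
    fromBlocks A 0 0 (A⁻¹)ᵀ ∈ urSpSet g := by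
  refine ⟨⟨?_, ?_⟩, ?_⟩
  · rw [det_fromBlocks_zero₂₁, det_transpose]
    exact hA.mul (A.isUnit_nonsing_inv_det hA)
  · rw [Jmat, fromBlocks_transpose, fromBlocks_multiply, fromBlocks_multiply]
    simp [← transpose_mul, Matrix.nonsing_inv_mul A hA]
  · simp [toBlocks_fromBlocks₂₁]

lemma ASA (i0 : Fin g) (A : Matrix (Fin g) (Fin g) ℤ) :
    A * Smat g i0 i0 * Aᵀ = Matrix.of (fun k l => A k i0 * A l i0) := by
  ext k l
  simp only [Matrix.mul_apply, Smat, Matrix.of_apply, transpose_apply, or_self, mul_ite,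
    mul_one, mul_zero]
  simp [ite_and, Finset.sum_ite_eq', ite_mul]

lemma sym_decomp (B : Matrix (Fin g) (Fin g) ℤ) (hB : B.IsSymm) :
    B = ∑ p : Fin g × Fin g, (if p.1 ≤ p.2 then B p.1 p.2 else 0) • Smat g p.1 p.2 := by
  ext k l
  rw [Matrix.sum_apply]
  simp only [Matrix.smul_apply, Smat, Matrix.of_apply, smul_eq_mul, mul_ite, mul_one, mul_zero]
  rcases le_or_gt k l with hkl | hkl
  · rw [Finset.sum_eq_single_of_mem (k, l) (Finset.mem_univ _)]
    · simp [hkl]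
    · rintro ⟨i, j⟩ - hne
      dsimp only
      split_ifs with h1 h2
      · rcases h1 with ⟨h2a, h2b⟩ | ⟨h2a, h2b⟩
        · exact absurd (Prod.ext h2a.symm h2b.symm) hne
        · have hij : i = j := le_antisymm h2 (by rw [← h2a, ← h2b]; exact hkl)
          exact absurd (Prod.ext (hij.trans h2a.symm) (hij.symm.trans h2b.symm)) hne
      · rfl
      · rfl
  · rw [Finset.sum_eq_single_of_mem (l, k) (Finset.mem_univ _)]
    · have hb : B l k = B k l := by
        conv_lhs => rw [← hB]
        rfl
      simp [le_of_lt hkl, hb]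
    · rintro ⟨i, j⟩ - hne
      dsimp only
      split_ifs with h1 h2
      · rcases h1 with ⟨h2a, h2b⟩ | ⟨h2a, h2b⟩
        · exact absurd h2 (by rw [← h2a, ← h2b]; exact not_le_of_gt hkl)
        · exact absurd (Prod.ext h2b.symm h2a.symm) hne
      · rfl
      · rfl

/-- The generating set of the normal closure. -/
def genset (g d : ℕ) (i0 : Fin g) : Set (Matrix (Fin g ⊕ Fin g) (Fin g ⊕ Fin g) ℤ) :=
  {m | ∃ u ∈ urSpSet g, ∃ y ∈ ({Ymat g i0 i0 ^ d} : Set (Matrix (Fin g ⊕ Fin g) (Fin g ⊕ Fin g) ℤ)),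
    m = u * y * u⁻¹ ∨ m = u * y⁻¹ * u⁻¹}

lemma gen_mem (d : ℕ) (i0 : Fin g) (A : Matrix (Fin g) (Fin g) ℤ) (hA : IsUnit A.det) :
    up ((d : ℤ) • (A * Smat g i0 i0 * Aᵀ)) ∈ Submonoid.closure (genset g d i0) ∧
      up (-((d : ℤ) • (A * Smat g i0 i0 * Aᵀ))) ∈ Submonoid.closure (genset g d i0) := by
  have hy : Ymat g i0 i0 ^ d = up ((d : ℤ) • Smat g i0 i0) := upper_pow _ d
  set u := fromBlocks A 0 0 (A⁻¹)ᵀ with hu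
  constructor
  · apply Submonoid.subset_closure
    refine ⟨u, u_mem A hA, _, rfl, Or.inl ?_⟩
    rw [hy, conj_eq _ _ hA]
    congr 1
    rw [Matrix.mul_smul, Matrix.smul_mul]
  · apply Submonoid.subset_closure
    refine ⟨u, u_mem A hA, _, rfl, Or.inr ?_⟩
    rw [hy, upper_inv, conj_eq _ _ hA]
    congr 1
    rw [Matrix.mul_neg, Matrix.neg_mul, Matrix.mul_smul, Matrix.smul_mul]

/-- The additive submonoid of blocks `C` such that `up (d • C)` lies in the closure. -/
def Tsub (g d : ℕ) (i0 : Fin g) : AddSubmonoid (Matrix (Fin g) (Fin g) ℤ) where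
  carrier := {C | up ((d : ℤ) • C) ∈ Submonoid.closure (genset g d i0)}
  zero_mem' := by
    simp only [Set.mem_setOf_eq, smul_zero, up_zero]
    exact one_mem _
  add_mem' := by
    intro a b ha hb
    simp only [Set.mem_setOf_eq] at *
    have := mul_mem ha hb
    rwa [upper_mul, ← smul_add] at this

lemma perm_col (σ : Equiv.Perm (Fin g)) (k l : Fin g) :
    (σ.permMatrix ℤ) k l = if k = σ.symm l then 1 else 0 := by
  rw [Equiv.Perm.permMatrix, PEquiv.toMatrix_apply, Equiv.toPEquiv_apply]
  by_cases h : k = σ.symm l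
  · subst h; simp
  · simp only [Option.mem_def, Option.some.injEq]
    rw [if_neg, if_neg h]
    intro hc
    exact h (by rw [← hc]; simp)

lemma smat_diag_mem (d : ℕ) (i0 i : Fin g) :
    Smat g i i ∈ Tsub g d i0 ∧ -Smat g i i ∈ Tsub g d i0 := by
  set σ := Equiv.swap i0 i
  set A := σ.permMatrix ℤ with hA
  have hdet : IsUnit A.det := by
    rw [hA, Equiv.Perm.permMatrix, Matrix.det_permutation]
    apply Int.isUnit_iff.2
    rcases Int.units_eq_one_or σ.sign with h | h <;> simp [h]
  have hcol : ∀ k, A k i0 = if k = i then 1 else 0 := by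
    intro k
    rw [hA, perm_col]
    congr 1
    simp [σ, Equiv.swap_apply_left]
  have hW : A * Smat g i0 i0 * Aᵀ = Smat g i i := by
    rw [ASA]
    ext k l
    simp only [Matrix.of_apply, hcol, Smat]
    by_cases hk : k = i <;> by_cases hl : l = i <;> simp [hk, hl]
  have := gen_mem d i0 A hdet
  rw [hW] at this
  exact ⟨this.1, by
    have h2 := this.2
    rw [← smul_neg] at h2
    exact h2⟩

lemma smat_off_mem (d : ℕ) (i0 i j : Fin g) (hij : i ≠ j) :
    Smat g i j ∈ Tsub g d i0 ∧ -Smat g i j ∈ Tsub g d i0 := by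
  set σ := Equiv.swap i0 i
  set A := Emat g j i * σ.permMatrix ℤ with hA
  have hdet : IsUnit A.det := by
    rw [hA, det_mul, Matrix.det_permutation]
    have h1 : (Emat g j i).det = 1 := by
      rw [Emat]
      exact Matrix.det_transvection_of_ne j i (Ne.symm hij) 1
    rw [h1, one_mul]
    apply Int.isUnit_iff.2
    rcases Int.units_eq_one_or σ.sign with h | h <;> simp [h]
  have hcol : ∀ k, A k i0 = (if k = i then 1 else 0) + (if k = j then 1 else 0) := by
    intro k
    rw [hA, Matrix.mul_apply]
    have : ∀ a, (σ.permMatrix ℤ) a i0 = if a = i then 1 else 0 := by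
      intro a
      rw [perm_col]
      congr 1
      simp [σ, Equiv.swap_apply_left]
    simp only [this, mul_ite, mul_one, mul_zero]
    rw [Finset.sum_ite_eq' Finset.univ i (fun a => Emat g j i k a)]
    simp [Emat, Matrix.one_apply, Matrix.single, add_comm, eq_comm]
  have hW : A * Smat g i0 i0 * Aᵀ = Smat g i i + Smat g j j + Smat g i j := by
    rw [ASA]
    ext k l
    simp only [Matrix.of_apply, hcol, Smat, Matrix.add_apply]
    by_cases hki : k = i <;> by_cases hkj : k = j <;> by_cases hli : l = i <;>
      by_cases hlj : l = j <;> simp_all <;> ring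
  have hgen := gen_mem d i0 A hdet
  rw [hW] at hgen
  have hii := smat_diag_mem (g := g) d i0 i
  have hjj := smat_diag_mem (g := g) d i0 j
  constructor
  · have : Smat g i j = (Smat g i i + Smat g j j + Smat g i j) + (-Smat g i i) + (-Smat g j j) := by
      abel
    rw [this]
    exact add_mem (add_mem hgen.1 hii.2) hjj.2
  · have : -Smat g i j = -(Smat g i i + Smat g j j + Smat g i j) + Smat g i i + Smat g j j := by
      abel
    rw [this]
    have hneg : -(Smat g i i + Smat g j j + Smat g i j) ∈ Tsub g d i0 := by
      have h2 := (gen_mem d i0 A hdet).2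
      rw [hW] at h2
      have : up (-((d:ℤ) • (Smat g i i + Smat g j j + Smat g i j)))
          = up ((d:ℤ) • (-(Smat g i i + Smat g j j + Smat g i j))) := by rw [smul_neg]
      rw [this] at h2
      exact h2
    exact add_mem (add_mem hneg hii.1) hjj.1

lemma zsmul_mem_T (d : ℕ) (i0 : Fin g) {x : Matrix (Fin g) (Fin g) ℤ}
    (h1 : x ∈ Tsub g d i0) (h2 : -x ∈ Tsub g d i0) (n : ℤ) : n • x ∈ Tsub g d i0 := by
  obtain ⟨m, rfl | rfl⟩ := n.eq_nat_or_neg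
  · rw [natCast_zsmul]
    exact AddSubmonoid.nsmul_mem _ h1 m
  · rw [neg_smul, ← smul_neg, natCast_zsmul]
    exact AddSubmonoid.nsmul_mem _ h2 m

end Stmt13Aux

open Stmt13Aux in
/-- For `g ≥ 1`, `d ≥ 2`, `S_g[d]` is contained in the normal closure of `Y_{1,1}^d`
in `urSp(2g)`. -/
theorem stmt13 (g d : ℕ) (hg : 1 ≤ g) (hd : 2 ≤ d) :
    {X | X ∈ SgSet g ∧ X.map (fun a : ℤ => (a : ZMod d)) = 1} ⊆
      ncl (urSpSet g) {Ymat g ⟨0, by omega⟩ ⟨0, by omega⟩ ^ d} := by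
  haveI : NeZero d := ⟨by omega⟩
  set i0 : Fin g := ⟨0, by omega⟩
  rintro X ⟨⟨B, hBsymm, rfl⟩, hmap⟩
  have hdvd : ∀ k l, (d : ℤ) ∣ B k l := by
    intro k l
    have := congrFun (congrFun hmap (Sum.inl k)) (Sum.inr l)
    simp only [Matrix.map_apply, fromBlocks_apply₁₂, Matrix.one_apply, Sum.inl.injEq,
      reduceCtorEq, if_false] at this
    exact (ZMod.intCast_zmod_eq_zero_iff_dvd _ d).1 this
  set B' : Matrix (Fin g) (Fin g) ℤ := Matrix.of fun k l => B k l / d with hB'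
  have hBeq : B = (d : ℤ) • B' := by
    ext k l
    simp only [hB', Matrix.smul_apply, Matrix.of_apply, smul_eq_mul]
    exact (Int.mul_ediv_cancel' (hdvd k l)).symm
  have hB'symm : B'.IsSymm := by
    ext k l
    simp only [hB', Matrix.transpose_apply, Matrix.of_apply]
    rw [hBsymm.apply]
  -- main membership
  show fromBlocks 1 B 0 1 ∈ ncl (urSpSet g) {Ymat g i0 i0 ^ d}
  have key : B' ∈ Tsub g d i0 := by
    rw [sym_decomp B' hB'symm]
    refine AddSubmonoid.sum_mem _ ?_
    rintro ⟨i, j⟩ -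
    dsimp only
    by_cases hij : i = j
    · subst hij
      exact zsmul_mem_T d i0 (smat_diag_mem d i0 i).1 (smat_diag_mem d i0 i).2 _
    · exact zsmul_mem_T d i0 (smat_off_mem d i0 i j hij).1 (smat_off_mem d i0 i j hij).2 _
  have : fromBlocks 1 B 0 1 = up ((d : ℤ) • B') := by rw [up, hBeq]
  rw [this]
  exact key
end
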